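/- arXiv:1605.07728 — 4 statements merged into one kernel-verified Lean document; each statement's English description precedes it below -/
import Mathlib

section
/- Let G be a directed graph on n vertices without loops, and let n₁ be the number of vertices with at least one outgoing edge. Then G is (n₁+1, 0)-representable. -/
/-- Inner product of two bit vectors. -/
def bvInner {k : ℕ} (d p : Fin k → Bool) : ℕ := ∑ q, (if d q ∧ p q then 1 else 0)

/-- `(k,t)`-representability of a directed graph (given by its adjacency relation). -/
def Representable {V : Type*} [Fintype V] (Adj : V → V → Prop) (k t : ℕ) : Prop :=
  ∃ d p : V → Fin k → Bool, ∀ i j : V, i ≠ j → (Adj i j ↔ bvInner (d i) (p j) ≤ t)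

lemma bvInner_single {k : ℕ} (a : Fin k) (p : Fin k → Bool) :
    bvInner (fun q => decide (q = a)) p = if p a then 1 else 0 := by
  unfold bvInner
  have : ∀ q : Fin k, (if (decide (q = a) = true) ∧ p q = true then (1:ℕ) else 0)
      = if q = a then (if p q then 1 else 0) else 0 := by
    intro q
    by_cases h : q = a <;> by_cases h' : p q = true <;> simp [h, h']
  simp only [this]
  simp

/-- If `n₁` vertices have an outgoing edge, the graph is `(n₁+1, 0)`-representable. -/
theorem representable_outdeg (n : ℕ) (Adj : Fin n → Fin n → Prop)
    (hloop : ∀ i, ¬ Adj i i) :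
    Representable Adj ({i : Fin n | ∃ j, i ≠ j ∧ Adj i j}.ncard + 1) 0 := by
  classical
  set S : Set (Fin n) := {i | ∃ j, i ≠ j ∧ Adj i j} with hS
  set n₁ := S.ncard with hn₁
  have hcard : Fintype.card S = n₁ := by
    rw [hn₁, Set.ncard_eq_toFinset_card', Set.toFinset_card]
  let e : S ≃ Fin n₁ := Fintype.equivFinOfCardEq hcard
  let f : Fin n → Fin (n₁ + 1) := fun i =>
    if h : i ∈ S then (e ⟨i, h⟩).castSucc else Fin.last n₁
  refine ⟨fun i q => decide (q = f i),
    fun j q => if h : q = Fin.last n₁ then true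
      else decide ¬ Adj (e.symm (q.castPred h) : Fin n) j, ?_⟩
  intro i j hij
  rw [bvInner_single]
  beta_reduce
  by_cases hi : i ∈ S
  · have hf : f i = (e ⟨i, hi⟩).castSucc := dif_pos hi
    have hne : f i ≠ Fin.last n₁ := by
      rw [hf]; exact (Fin.castSucc_lt_last _).ne
    rw [dif_neg hne]
    have hpred : (f i).castPred hne = e ⟨i, hi⟩ := by
      simp [hf]
    rw [hpred, Equiv.symm_apply_apply]
    by_cases hA : Adj i j <;> simp [hA]
  · have hf : f i = Fin.last n₁ := dif_neg hi
    rw [dif_pos hf]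
    have hnA : ¬ Adj i j := fun hA => hi ⟨j, hij, hA⟩
    simp [hnA]
end

section
/- Let G be a directed graph on n vertices without loops, and let n₂ be the number of vertices with at least one incoming edge. Then G is (n₂+1, 0)-representable. -/
/-- If `n₂` vertices have an incoming edge, the graph is `(n₂+1, 0)`-representable. -/
theorem representable_indeg (n : ℕ) (Adj : Fin n → Fin n → Prop)
    (hloop : ∀ i, ¬ Adj i i) :
    Representable Adj ({j : Fin n | ∃ i, i ≠ j ∧ Adj i j}.ncard + 1) 0 := by
  classical
  set S : Set (Fin n) := {j : Fin n | ∃ i, i ≠ j ∧ Adj i j} with hS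
  set T : Finset (Fin n) := S.toFinset with hT
  have hcard : T.card = S.ncard := (Set.ncard_eq_toFinset_card' S).symm
  set k : ℕ := S.ncard + 1 with hk
  have hlt : ∀ h : {x // x ∈ T}, ((T.equivFin h : Fin T.card) : ℕ) < S.ncard := by
    intro h; have := (T.equivFin h).isLt; omega
  let c : Fin n → Fin k := fun j =>
    if h : j ∈ T then ⟨(T.equivFin ⟨j, h⟩ : Fin T.card), by have := hlt ⟨j, h⟩; omega⟩
    else 0
  have hcinj : ∀ j₁ ∈ T, ∀ j₂ ∈ T, c j₁ = c j₂ → j₁ = j₂ := by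
    intro j₁ h₁ j₂ h₂ hc
    simp only [c, dif_pos h₁, dif_pos h₂] at hc
    simp only [Fin.mk.injEq] at hc
    have : T.equivFin ⟨j₁, h₁⟩ = T.equivFin ⟨j₂, h₂⟩ := Fin.ext hc
    have := T.equivFin.injective this
    exact Subtype.mk_eq_mk.mp this
  have hclast : ∀ j ∈ T, c j ≠ Fin.last S.ncard := by
    intro j h hcl
    have : (c j : ℕ) = S.ncard := by rw [hcl]; rfl
    simp only [c, dif_pos h] at this
    have := hlt ⟨j, h⟩; omega
  let d : Fin n → Fin k → Bool := fun i q =>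
    decide ¬ (∃ j, ∃ h : j ∈ T, c j = q ∧ Adj i j)
  let p : Fin n → Fin k → Bool := fun j q =>
    if j ∈ T then decide (q = c j) else true
  refine ⟨d, p, fun i j hij => ?_⟩
  have hinner : ∀ i' j', (bvInner (d i') (p j') ≤ 0 ↔ ∀ q, ¬ (d i' q ∧ p j' q)) := by
    intro i' j'
    rw [Nat.le_zero, bvInner, Finset.sum_eq_zero_iff]
    constructor
    · intro h q hq
      have := h q (Finset.mem_univ q)
      rw [if_pos hq] at this; exact one_ne_zero this
    · intro h q _
      rw [if_neg (h q)]
  rw [hinner]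
  by_cases hjT : j ∈ T
  · constructor
    · intro hadj q ⟨hd, hp⟩
      simp only [p, if_pos hjT, decide_eq_true_eq] at hp
      subst hp
      simp only [d, decide_eq_true_eq] at hd
      exact hd ⟨j, hjT, rfl, hadj⟩
    · intro h
      by_contra hadj
      apply h (c j)
      constructor
      · simp only [d, decide_eq_true_eq]
        rintro ⟨j', hj', hc, hadj'⟩
        exact hadj (hcinj j' hj' j hjT hc ▸ hadj')
      · simp [p, if_pos hjT]
  · have hnadj : ¬ Adj i j := fun hadj => hjT (by simp [hT, hS]; exact ⟨i, hij, hadj⟩)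
    constructor
    · intro hadj; exact absurd hadj hnadj
    · intro h
      exfalso
      apply h (Fin.last S.ncard)
      constructor
      · simp only [d, decide_eq_true_eq]
        rintro ⟨j', hj', hc, _⟩
        exact hclast j' hj' hc
      · simp only [p, if_neg hjT]
end

section
/- For every n ≥ 3, the directed graph on vertices Z/nZ with edge set E = {(i,j) : j ≠ i and j ≠ i - 1} (the complement of a directed Hamiltonian cycle, without loops) is not (k,0)-representable for any k < n. -/
lemma bvInner_le_zero_iff {k : ℕ} (d p : Fin k → Bool) :
    bvInner d p ≤ 0 ↔ ∀ q, ¬ (d q ∧ p q) := by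
  rw [Nat.le_zero, bvInner, Finset.sum_eq_zero_iff]
  constructor
  · intro h q hq
    have := h q (Finset.mem_univ q)
    simp [hq] at this
  · intro h q _
    simp [h q]

/-- For `n ≥ 3`, the complement of a directed Hamiltonian cycle on `ZMod n` is not
`(k,0)`-representable for any `k < n`. -/
theorem not_representable_complement_cycle (n : ℕ) [NeZero n] (hn : 3 ≤ n)
    (k : ℕ) (hk : k < n) :
    ¬ Representable (fun i j : ZMod n => j ≠ i ∧ j ≠ i - 1) k 0 := by
  haveI : Fact (1 < n) := ⟨by omega⟩
  rintro ⟨d, p, h⟩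
  have h1 : (1 : ZMod n) ≠ 0 := one_ne_zero
  have h2 : (2 : ZMod n) ≠ 0 := by
    have : ((2 : ℕ) : ZMod n) ≠ 0 := by
      rw [Ne, ZMod.natCast_eq_zero_iff]
      intro hd
      have := Nat.le_of_dvd (by norm_num) hd
      omega
    simpa using this
  have hsub1 : ∀ i : ZMod n, i - 1 ≠ i := by
    intro i hi
    apply h1
    linear_combination -hi
  -- for each i, find a witness coordinate
  have key : ∀ i : ZMod n, ∃ q, d i q ∧ p (i - 1) q := by
    intro i
    have hiff := h i (i - 1) (fun e => hsub1 i e.symm)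
    have hne : ¬ ((i - 1 ≠ i ∧ i - 1 ≠ i - 1)) := by simp
    have hb : ¬ bvInner (d i) (p (i - 1)) ≤ 0 := fun hb => hne (hiff.mpr hb)
    rw [bvInner_le_zero_iff] at hb
    push_neg at hb
    obtain ⟨q, hq⟩ := hb
    exact ⟨q, hq⟩
  choose f hf using key
  obtain ⟨i, i', hii, hfe⟩ : ∃ i i' : ZMod n, i ≠ i' ∧ f i = f i' := by
    have : Fintype.card (Fin k) < Fintype.card (ZMod n) := by
      rw [ZMod.card, Fintype.card_fin]; exact hk
    obtain ⟨i, i', hne, he⟩ := Fintype.exists_ne_map_eq_of_card_lt f this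
    exact ⟨i, i', hne, he⟩
  have hdi : d i (f i) ∧ p (i - 1) (f i) := hf i
  have hdi' : d i' (f i) ∧ p (i' - 1) (f i) := by rw [hfe]; exact hf i'
  by_cases hc : i' = i - 1
  · -- use edge (i, i'-1): i'-1 = i-2
    have e1 : i' - 1 ≠ i := by
      rw [hc]; intro e
      apply h2
      linear_combination -e
    have e2 : i' - 1 ≠ i - 1 := by
      rw [hc]; exact hsub1 (i - 1)
    have hedge := (h i (i' - 1) (fun e => e1 e.symm)).mp ⟨e1, e2⟩
    rw [bvInner_le_zero_iff] at hedge
    exact hedge (f i) ⟨hdi.1, hdi'.2⟩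
  · -- use edge (i', i-1)
    have e1 : i - 1 ≠ i' := fun e => hc e.symm
    have e2 : i - 1 ≠ i' - 1 := by
      intro e
      exact hii (by linear_combination e)
    have hedge := (h i' (i - 1) (fun e => e1 e.symm)).mp ⟨e1, e2⟩
    rw [bvInner_le_zero_iff] at hedge
    exact hedge (f i) ⟨hdi'.1, hdi.2⟩
end

section
/- Let G be the complement of a directed Hamiltonian cycle on N = C(k,2) vertices (vertex set Z/NZ, edges (i,j) for all j ∉ {i, i-1}). In any (k,1)-representation of G, for every vertex u there exist two distinct conflict bits q₁, q₂ that both lie in Q_d(u) ∩ Q_p(u-1), and moreover the pairs {q₁^u, q₂^u} are distinct across distinct vertices u. -/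
lemma bvInner_eq_card {k : ℕ} (d p : Fin k → Bool) :
    bvInner d p = (Finset.univ.filter (fun q => d q ∧ p q)).card := by
  rw [bvInner, Finset.card_filter]

/-- In any `(k,1)`-representation of the complement of a directed Hamiltonian cycle on
`N = C(k,2)` vertices, every vertex `u` has two distinct conflict bits lying in
`Q_d(u) ∩ Q_p(u-1)`, and these pairs are distinct across distinct vertices. -/
theorem gadget_conflict_pairs (k : ℕ) [NeZero (Nat.choose k 2)]
    (hN : 3 ≤ Nat.choose k 2)
    (d p : ZMod (Nat.choose k 2) → Fin k → Bool)
    (hrep : ∀ i j : ZMod (Nat.choose k 2), i ≠ j →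
      ((j ≠ i - 1) ↔ bvInner (d i) (p j) ≤ 1)) :
    ∃ q : ZMod (Nat.choose k 2) → Fin k × Fin k,
      (∀ u, (q u).1 ≠ (q u).2 ∧
        d u (q u).1 = true ∧ d u (q u).2 = true ∧
        p (u - 1) (q u).1 = true ∧ p (u - 1) (q u).2 = true) ∧
      ∀ u v, u ≠ v →
        ({(q u).1, (q u).2} : Finset (Fin k)) ≠ {(q v).1, (q v).2} := by
  haveI : Fact (1 < Nat.choose k 2) := ⟨by omega⟩
  have hone : (1 : ZMod (Nat.choose k 2)) ≠ 0 := one_ne_zero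
  have hsub : ∀ u : ZMod (Nat.choose k 2), u ≠ u - 1 := by
    intro u h
    exact hone (by linear_combination h)
  have key : ∀ u : ZMod (Nat.choose k 2), ∃ x y : Fin k, x ≠ y ∧
      d u x = true ∧ d u y = true ∧ p (u - 1) x = true ∧ p (u - 1) y = true := by
    intro u
    have h2 : ¬ bvInner (d u) (p (u - 1)) ≤ 1 := fun hle =>
      ((hrep u (u - 1) (hsub u)).mpr hle) rfl
    rw [bvInner_eq_card] at h2
    push_neg at h2
    obtain ⟨x, y, hx, hy, hxy⟩ := Finset.one_lt_card_iff.mp h2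
    simp only [Finset.mem_filter] at hx hy
    exact ⟨x, y, hxy, hx.2.1, hy.2.1, hx.2.2, hy.2.2⟩
  choose a b hab hda hdb hpa hpb using key
  refine ⟨fun u => (a u, b u), fun u => ⟨hab u, hda u, hdb u, hpa u, hpb u⟩, ?_⟩
  intro u v huv heq
  simp only at heq
  have hmem : ∀ x : Fin k, x ∈ ({a v, b v} : Finset (Fin k)) → d u x = true := by
    intro x hx
    rw [← heq] at hx
    simp only [Finset.mem_insert, Finset.mem_singleton] at hx
    rcases hx with h | h <;> subst h
    · exact hda u
    · exact hdb u
  have hmem' : ∀ x : Fin k, x ∈ ({a u, b u} : Finset (Fin k)) → d v x = true := by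
    intro x hx
    rw [heq] at hx
    simp only [Finset.mem_insert, Finset.mem_singleton] at hx
    rcases hx with h | h <;> subst h
    · exact hda v
    · exact hdb v
  have hbig : ¬ bvInner (d u) (p (v - 1)) ≤ 1 := by
    intro hle
    rw [bvInner_eq_card] at hle
    have h1 : 1 < (Finset.univ.filter (fun q => d u q ∧ p (v - 1) q)).card :=
      Finset.one_lt_card_iff.mpr ⟨a v, b v,
        Finset.mem_filter.mpr ⟨Finset.mem_univ _, hmem (a v) (by simp), hpa v⟩,
        Finset.mem_filter.mpr ⟨Finset.mem_univ _, hmem (b v) (by simp), hpb v⟩, hab v⟩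
    omega
  have hbig' : ¬ bvInner (d v) (p (u - 1)) ≤ 1 := by
    intro hle
    rw [bvInner_eq_card] at hle
    have h1 : 1 < (Finset.univ.filter (fun q => d v q ∧ p (u - 1) q)).card :=
      Finset.one_lt_card_iff.mpr ⟨a u, b u,
        Finset.mem_filter.mpr ⟨Finset.mem_univ _, hmem' (a u) (by simp), hpa u⟩,
        Finset.mem_filter.mpr ⟨Finset.mem_univ _, hmem' (b u) (by simp), hpb u⟩, hab u⟩
    omega
  by_cases hcase : u = v - 1
  · have hne : v ≠ u - 1 := by
      intro h
      rw [hcase] at h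
      have h2 : (2 : ZMod (Nat.choose k 2)) = 0 := by linear_combination h
      have h2' : ((2 : ℕ) : ZMod (Nat.choose k 2)) = 0 := by exact_mod_cast h2
      have := (ZMod.natCast_eq_zero_iff 2 (Nat.choose k 2)).mp h2'
      have := Nat.le_of_dvd (by norm_num) this
      omega
    have hne2 : u - 1 ≠ v - 1 := fun h => huv (by linear_combination h)
    exact hbig' ((hrep v (u - 1) hne).mp hne2)
  · have hne2 : v - 1 ≠ u - 1 := fun h => huv (by linear_combination -h)
    exact hbig ((hrep u (v - 1) hcase).mp hne2)
end
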